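/- Let ν be a Borel measure on ℝⁿ such that ν(A) < ∞ for every Borel set A whose closure does not contain 0. Let (μ_k)_{k∈ℕ} be finite Borel measures on ℝⁿ and (t_k)_{k∈ℕ} positive reals with t_k → 0, and suppose that (1/t_k)∫_{ℝⁿ} f dμ_k → ∫_{ℝⁿ} f dν as k → ∞ for every bounded continuous function f : ℝⁿ → ℝ which vanishes on some neighborhood of 0. Then for every half-open box (α,β] = {v ∈ ℝⁿ : αᵢ < vᵢ ≤ βᵢ for i = 1,…,n} with 0 ∉ [α,β] and ν(∂(α,β]) = 0, one has (1/t_k) μ_k((α,β]) → ν((α,β]) as k → ∞. -/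

import Mathlib

open MeasureTheory Filter

/-- If ν is finite on Borel sets whose closure avoids 0, and
(1/t_k)∫ f dμ_k → ∫ f dν for every bounded continuous f vanishing near 0, then for
every half-open box (α,β] with 0 ∉ [α,β] and ν(∂(α,β]) = 0 one has
(1/t_k) μ_k((α,β]) → ν((α,β]). -/
theorem tendsto_measure_box_of_tendsto_integral {n : ℕ}
    (ν : Measure (Fin n → ℝ))
    (hν : ∀ A : Set (Fin n → ℝ), MeasurableSet A → (0 : Fin n → ℝ) ∉ closure A → ν A < ⊤)
    (μ : ℕ → Measure (Fin n → ℝ)) (hμ : ∀ k, IsFiniteMeasure (μ k))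
    (t : ℕ → ℝ) (ht : ∀ k, 0 < t k) (ht0 : Tendsto t atTop (nhds 0))
    (hconv : ∀ f : (Fin n → ℝ) → ℝ, Continuous f → (∃ C : ℝ, ∀ x, |f x| ≤ C) →
      (∃ s ∈ nhds (0 : Fin n → ℝ), ∀ x ∈ s, f x = 0) →
      Tendsto (fun k => (1 / t k) * ∫ x, f x ∂(μ k)) atTop (nhds (∫ x, f x ∂ν)))
    (α β : Fin n → ℝ)
    (hbox : (0 : Fin n → ℝ) ∉ Set.univ.pi fun i => Set.Icc (α i) (β i))
    (hbdry : ν (frontier (Set.univ.pi fun i => Set.Ioc (α i) (β i))) = 0) :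
    Tendsto (fun k => (1 / t k) * (μ k (Set.univ.pi fun i => Set.Ioc (α i) (β i))).toReal)
      atTop (nhds (ν (Set.univ.pi fun i => Set.Ioc (α i) (β i))).toReal) := by
  classical
  set B : Set (Fin n → ℝ) := Set.univ.pi fun i => Set.Ioc (α i) (β i) with hBdef
  set K : Set (Fin n → ℝ) := Set.univ.pi fun i => Set.Icc (α i) (β i) with hKdef
  have hBmeas : MeasurableSet B := MeasurableSet.univ_pi fun i => measurableSet_Ioc
  have hBK : B ⊆ K := Set.pi_mono fun i _ => Set.Ioc_subset_Icc_self
  have hKclosed : IsClosed K := isClosed_set_pi fun i _ => isClosed_Icc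
  rcases Set.eq_empty_or_nonempty B with hBe | hBne
  · rw [hBe]
    simp only [measure_empty, ENNReal.toReal_zero, mul_zero]
    exact tendsto_const_nhds
  -- the closure of B
  have hCK : closure B ⊆ K := closure_minimal hBK hKclosed
  have hCne : (closure B).Nonempty := hBne.closure
  -- a ball around 0 avoiding K
  obtain ⟨r, hr, hball⟩ : ∃ r > 0, Metric.ball (0 : Fin n → ℝ) r ⊆ Kᶜ := by
    have : Kᶜ ∈ nhds (0 : Fin n → ℝ) := hKclosed.isOpen_compl.mem_nhds hbox
    exact Metric.mem_nhds_iff.1 this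
  have hsep : ∀ y ∈ closure B, r ≤ dist (0 : Fin n → ℝ) y := by
    intro y hy
    by_contra h
    push_neg at h
    have : y ∈ Metric.ball (0 : Fin n → ℝ) r := by
      rwa [Metric.mem_ball, dist_comm]
    exact hball this (hCK hy)
  -- finiteness of the (r/2)-thickening of B
  have hTfin : ν (Metric.thickening (r / 2) B) ≠ ⊤ := by
    refine (hν _ Metric.isOpen_thickening.measurableSet ?_).ne
    intro h0
    have h1 : (0 : Fin n → ℝ) ∈ Metric.cthickening (r / 2) B :=
      Metric.closure_thickening_subset_cthickening _ _ h0
    rw [Metric.mem_cthickening_iff] at h1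
    have h2 : EMetric.infEdist (0 : Fin n → ℝ) B < ENNReal.ofReal r :=
      lt_of_le_of_lt h1 (by
        rw [ENNReal.ofReal_lt_ofReal_iff hr]; linarith)
    obtain ⟨y, hy, hyd⟩ := EMetric.infEdist_lt_iff.1 h2
    rw [edist_lt_ofReal] at hyd
    have h3 := hsep y (subset_closure hy)
    linarith
  have hνB : ν B ≠ ⊤ := by
    refine ((measure_mono ?_).trans_lt hTfin.lt_top).ne
    exact (Metric.self_subset_thickening (by positivity) B)
  -- ν (closure B) = ν B and ν (interior B) = ν B
  have hclosB : ν (closure B) = ν B := by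
    refine le_antisymm ?_ (measure_mono subset_closure)
    have hsub : closure B ⊆ B ∪ frontier B := by
      intro x hx
      by_cases h : x ∈ B
      · exact Or.inl h
      · exact Or.inr ⟨hx, fun h' => h (interior_subset h')⟩
    calc ν (closure B) ≤ ν (B ∪ frontier B) := measure_mono hsub
      _ ≤ ν B + ν (frontier B) := measure_union_le _ _
      _ = ν B := by rw [hbdry, add_zero]
  have hintB : ν (interior B) = ν B := by
    refine le_antisymm (measure_mono interior_subset) ?_
    have hsub : B ⊆ interior B ∪ frontier B := by
      intro x hx
      by_cases h : x ∈ interior B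
      · exact Or.inl h
      · exact Or.inr ⟨subset_closure hx, h⟩
    calc ν B ≤ ν (interior B ∪ frontier B) := measure_mono hsub
      _ ≤ ν (interior B) + ν (frontier B) := measure_union_le _ _
      _ = ν (interior B) := by rw [hbdry, add_zero]
  set L : ℝ := (ν B).toReal with hLdef
  rw [Metric.tendsto_nhds]
  intro ε hε
  ------------------------------------------------------------------
  -- UPPER bound : choose δ
  ------------------------------------------------------------------
  have hthick : Tendsto (fun δ => (ν (Metric.thickening δ B)).toReal)
      (nhdsWithin 0 (Set.Ioi 0)) (nhds L) := by
    have h1 := tendsto_measure_thickening (μ := ν) (s := B)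
      ⟨r / 2, by positivity, hTfin⟩
    rw [hclosB] at h1
    exact (ENNReal.tendsto_toReal hνB).comp h1
  have h2 : ∀ᶠ δ in nhdsWithin (0:ℝ) (Set.Ioi 0),
      (ν (Metric.thickening δ B)).toReal < L + ε / 2 :=
    hthick.eventually_lt_const (by linarith)
  have h3 : ∀ᶠ δ in nhdsWithin (0:ℝ) (Set.Ioi 0), δ ∈ Set.Ioo (0:ℝ) (r / 2) :=
    Ioo_mem_nhdsGT_of_mem ⟨le_refl _, by positivity⟩
  obtain ⟨δ, ⟨hδ0, hδr⟩, hδν⟩ := (h3.and h2).exists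
  -- the test function g
  set g : (Fin n → ℝ) → ℝ := fun x => 1 - min 1 (Metric.infDist x (closure B) / δ) with hgdef
  have hgcont : Continuous g :=
    continuous_const.sub (continuous_const.min ((Metric.continuous_infDist_pt _).div_const δ))
  have hg0 : ∀ x, 0 ≤ g x := by
    intro x
    have : min 1 (Metric.infDist x (closure B) / δ) ≤ 1 := min_le_left _ _
    simp only [hgdef]; linarith
  have hg1 : ∀ x, g x ≤ 1 := by
    intro x
    have : 0 ≤ min 1 (Metric.infDist x (closure B) / δ) :=
      le_min one_pos.le (div_nonneg Metric.infDist_nonneg hδ0.le)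
    simp only [hgdef]; linarith
  have hgbd : ∀ x, |g x| ≤ 1 := fun x => abs_le.2 ⟨by linarith [hg0 x], hg1 x⟩
  have hgvan : ∀ x ∈ Metric.ball (0 : Fin n → ℝ) (r / 2), g x = 0 := by
    intro x hx
    have hxd : dist x 0 < r / 2 := Metric.mem_ball.1 hx
    have hinf : r / 2 ≤ Metric.infDist x (closure B) := by
      by_contra h
      push_neg at h
      obtain ⟨y, hy, hyd⟩ := (Metric.infDist_lt_iff hCne).1 h
      have h1 := hsep y hy
      have h2 : dist (0 : Fin n → ℝ) y ≤ dist 0 x + dist x y := dist_triangle _ _ _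
      rw [dist_comm 0 x] at h2
      linarith
    have : (1:ℝ) ≤ Metric.infDist x (closure B) / δ := by
      rw [le_div_iff₀ hδ0]; linarith
    simp only [hgdef, min_eq_left this, sub_self]
  have hg_ge_ind : ∀ x, B.indicator (fun _ => (1:ℝ)) x ≤ g x := by
    intro x
    by_cases hx : x ∈ B
    · rw [Set.indicator_of_mem hx]
      have : Metric.infDist x (closure B) = 0 := Metric.infDist_zero_of_mem (subset_closure hx)
      simp [hgdef, this, div_eq_mul_inv]
    · rw [Set.indicator_of_notMem hx]; exact hg0 x
  have hg_le_ind : ∀ x, g x ≤ (Metric.thickening δ B).indicator (fun _ => (1:ℝ)) x := by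
    intro x
    by_cases hx : x ∈ Metric.thickening δ B
    · rw [Set.indicator_of_mem hx]; exact hg1 x
    · rw [Set.indicator_of_notMem hx]
      have h1 : δ ≤ Metric.infDist x (closure B) := by
        by_contra h
        push_neg at h
        rw [← Metric.thickening_closure] at hx
        exact hx ((Metric.mem_thickening_iff_infDist_lt hCne).2 h)
      have : (1:ℝ) ≤ Metric.infDist x (closure B) / δ := by
        rw [le_div_iff₀ hδ0]; linarith
      simp [hgdef, min_eq_left this]
  -- measure facts for the thickening
  have hTmeas : MeasurableSet (Metric.thickening δ B) := Metric.isOpen_thickening.measurableSet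
  have hTδfin : ν (Metric.thickening δ B) ≠ ⊤ := by
    refine ((measure_mono (Metric.thickening_mono hδr.le B)).trans_lt hTfin.lt_top).ne
  have hind_int : Integrable ((Metric.thickening δ B).indicator (fun _ => (1:ℝ))) ν := by
    rw [integrable_indicator_iff hTmeas]
    exact integrableOn_const hTδfin
  have hg_int : Integrable g ν := by
    refine hind_int.mono' hgcont.aestronglyMeasurable ?_
    filter_upwards with x
    rw [Real.norm_eq_abs, abs_of_nonneg (hg0 x)]
    exact hg_le_ind x
  have hgν : ∫ x, g x ∂ν ≤ (ν (Metric.thickening δ B)).toReal := by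
    calc ∫ x, g x ∂ν ≤ ∫ x, (Metric.thickening δ B).indicator (fun _ => (1:ℝ)) x ∂ν :=
          integral_mono hg_int hind_int hg_le_ind
      _ = (ν (Metric.thickening δ B)).toReal := by
          rw [← measureReal_def, ← integral_indicator_one hTmeas]; rfl
  have hupper : ∀ᶠ k in atTop, (1 / t k) * ∫ x, g x ∂(μ k) < L + ε := by
    refine (hconv g hgcont ⟨1, hgbd⟩
      ⟨Metric.ball 0 (r / 2), Metric.ball_mem_nhds _ (by positivity), hgvan⟩).eventually_lt_const ?_
    calc ∫ x, g x ∂ν ≤ (ν (Metric.thickening δ B)).toReal := hgν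
      _ < L + ε / 2 := hδν
      _ < L + ε := by linarith
  have hupk : ∀ k, (1 / t k) * (μ k B).toReal ≤ (1 / t k) * ∫ x, g x ∂(μ k) := by
    intro k
    have := hμ k
    have hindk : Integrable (B.indicator (fun _ => (1:ℝ))) (μ k) := by
      rw [integrable_indicator_iff hBmeas]
      exact (integrableOn_const_iff).2 (Or.inr (measure_lt_top _ _))
    have hgk : Integrable g (μ k) := by
      refine (integrable_const (1:ℝ)).mono' hgcont.aestronglyMeasurable ?_
      filter_upwards with x
      rw [Real.norm_eq_abs]; exact hgbd x
    have h1 : (μ k B).toReal ≤ ∫ x, g x ∂(μ k) := by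
      calc (μ k B).toReal = ∫ x, B.indicator (fun _ => (1:ℝ)) x ∂(μ k) := by
            rw [← measureReal_def, ← integral_indicator_one hBmeas]; rfl
        _ ≤ ∫ x, g x ∂(μ k) := integral_mono hindk hgk hg_ge_ind
    exact mul_le_mul_of_nonneg_left h1 (one_div_nonneg.2 (ht k).le)
  ------------------------------------------------------------------
  -- LOWER bound : inner approximation of the interior
  ------------------------------------------------------------------
  have hUopen : IsOpen (interior B) := isOpen_interior
  have hUcclosed : IsClosed (interior B)ᶜ := hUopen.isClosed_compl
  have hUcne : ((interior B)ᶜ).Nonempty := by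
    refine ⟨0, fun h0 => hbox (hBK (interior_subset h0))⟩
  set E : ℕ → Set (Fin n → ℝ) :=
    fun m => {x | 1 / ((m : ℝ) + 1) ≤ Metric.infDist x (interior B)ᶜ} with hEdef
  have hEmeas : ∀ m, MeasurableSet (E m) := by
    intro m
    exact (isClosed_le continuous_const (Metric.continuous_infDist_pt _)).measurableSet
  have hEmono : Monotone E := by
    intro m m' hmm x hx
    simp only [hEdef, Set.mem_setOf_eq] at hx ⊢
    refine le_trans ?_ hx
    apply one_div_le_one_div_of_le (by positivity)
    have : (m : ℝ) ≤ (m' : ℝ) := Nat.cast_le.2 hmm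
    linarith
  have hEU : (⋃ m, E m) = interior B := by
    apply subset_antisymm
    · refine Set.iUnion_subset fun m x hx => ?_
      have h1 : (0:ℝ) < Metric.infDist x (interior B)ᶜ :=
        lt_of_lt_of_le (by positivity) hx
      by_contra h
      exact ((hUcclosed.notMem_iff_infDist_pos hUcne).2 h1) h
    · intro x hx
      have h1 : (0:ℝ) < Metric.infDist x (interior B)ᶜ :=
        (hUcclosed.notMem_iff_infDist_pos hUcne).1 (fun h => h hx)
      obtain ⟨m, hm⟩ := exists_nat_one_div_lt h1
      exact Set.mem_iUnion.2 ⟨m, hm.le⟩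
  have htendE : Tendsto (fun m => (ν (E m)).toReal) atTop (nhds L) := by
    have h1 := tendsto_measure_iUnion_atTop (μ := ν) hEmono
    rw [hEU, hintB] at h1
    exact (ENNReal.tendsto_toReal hνB).comp h1
  obtain ⟨m, hmE⟩ := (htendE.eventually_const_lt (show L - ε / 2 < L by linarith)).exists
  set δ' : ℝ := 1 / ((m : ℝ) + 1) with hδ'def
  have hδ'0 : 0 < δ' := by positivity
  set f : (Fin n → ℝ) → ℝ := fun x => min 1 (Metric.infDist x (interior B)ᶜ / δ') with hfdef
  have hfcont : Continuous f :=
    continuous_const.min ((Metric.continuous_infDist_pt _).div_const δ')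
  have hf0 : ∀ x, 0 ≤ f x := fun x =>
    le_min one_pos.le (div_nonneg Metric.infDist_nonneg hδ'0.le)
  have hf1 : ∀ x, f x ≤ 1 := fun x => min_le_left _ _
  have hfbd : ∀ x, |f x| ≤ 1 := fun x => abs_le.2 ⟨by linarith [hf0 x], hf1 x⟩
  have hfvan : ∀ x ∈ Metric.ball (0 : Fin n → ℝ) r, f x = 0 := by
    intro x hx
    have hxU : x ∈ (interior B)ᶜ := fun h => hball hx (hBK (interior_subset h))
    have : Metric.infDist x (interior B)ᶜ = 0 := Metric.infDist_zero_of_mem hxU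
    simp [hfdef, this, hδ'0.ne']
  have hf_ge_ind : ∀ x, (E m).indicator (fun _ => (1:ℝ)) x ≤ f x := by
    intro x
    by_cases hx : x ∈ E m
    · rw [Set.indicator_of_mem hx]
      have h1 : δ' ≤ Metric.infDist x (interior B)ᶜ := hx
      have : (1:ℝ) ≤ Metric.infDist x (interior B)ᶜ / δ' := by
        rw [le_div_iff₀ hδ'0]; linarith
      simp [hfdef, min_eq_left this]
    · rw [Set.indicator_of_notMem hx]; exact hf0 x
  have hf_le_ind : ∀ x, f x ≤ B.indicator (fun _ => (1:ℝ)) x := by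
    intro x
    by_cases hx : x ∈ B
    · rw [Set.indicator_of_mem hx]; exact hf1 x
    · rw [Set.indicator_of_notMem hx]
      have hxU : x ∈ (interior B)ᶜ := fun h => hx (interior_subset h)
      have : Metric.infDist x (interior B)ᶜ = 0 := Metric.infDist_zero_of_mem hxU
      simp [hfdef, this, hδ'0.ne']
  have hindB_int : Integrable (B.indicator (fun _ => (1:ℝ))) ν := by
    rw [integrable_indicator_iff hBmeas]
    exact (integrableOn_const_iff).2 (Or.inr hνB.lt_top)
  have hf_int : Integrable f ν := by
    refine hindB_int.mono' hfcont.aestronglyMeasurable ?_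
    filter_upwards with x
    rw [Real.norm_eq_abs, abs_of_nonneg (hf0 x)]
    exact hf_le_ind x
  have hindE_int : Integrable ((E m).indicator (fun _ => (1:ℝ))) ν := by
    rw [integrable_indicator_iff (hEmeas m)]
    refine (integrableOn_const_iff).2 (Or.inr ?_)
    refine lt_of_le_of_lt (measure_mono ?_) hνB.lt_top
    refine (subset_trans ?_ interior_subset)
    intro x hx
    rw [← hEU]; exact Set.mem_iUnion.2 ⟨m, hx⟩
  have hfν : (ν (E m)).toReal ≤ ∫ x, f x ∂ν := by
    calc (ν (E m)).toReal = ∫ x, (E m).indicator (fun _ => (1:ℝ)) x ∂ν := by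
          rw [← measureReal_def, ← integral_indicator_one (hEmeas m)]; rfl
      _ ≤ ∫ x, f x ∂ν := integral_mono hindE_int hf_int hf_ge_ind
  have hlower : ∀ᶠ k in atTop, L - ε < (1 / t k) * ∫ x, f x ∂(μ k) := by
    refine (hconv f hfcont ⟨1, hfbd⟩
      ⟨Metric.ball 0 r, Metric.ball_mem_nhds _ hr, hfvan⟩).eventually_const_lt ?_
    calc L - ε < L - ε / 2 := by linarith
      _ < (ν (E m)).toReal := hmE
      _ ≤ ∫ x, f x ∂ν := hfν
  have hlok : ∀ k, (1 / t k) * ∫ x, f x ∂(μ k) ≤ (1 / t k) * (μ k B).toReal := by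
    intro k
    have := hμ k
    have hindk : Integrable (B.indicator (fun _ => (1:ℝ))) (μ k) := by
      rw [integrable_indicator_iff hBmeas]
      exact (integrableOn_const_iff).2 (Or.inr (measure_lt_top _ _))
    have hfk : Integrable f (μ k) := by
      refine (integrable_const (1:ℝ)).mono' hfcont.aestronglyMeasurable ?_
      filter_upwards with x
      rw [Real.norm_eq_abs]; exact hfbd x
    have h1 : ∫ x, f x ∂(μ k) ≤ (μ k B).toReal := by
      calc ∫ x, f x ∂(μ k) ≤ ∫ x, B.indicator (fun _ => (1:ℝ)) x ∂(μ k) :=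
            integral_mono hfk hindk hf_le_ind
        _ = (μ k B).toReal := by rw [← measureReal_def, ← integral_indicator_one hBmeas]; rfl
    exact mul_le_mul_of_nonneg_left h1 (one_div_nonneg.2 (ht k).le)
  ------------------------------------------------------------------
  -- combine
  ------------------------------------------------------------------
  filter_upwards [hupper, hlower] with k hup hlo
  rw [Real.dist_eq, abs_sub_lt_iff]
  constructor
  · have := hupk k
    linarith
  · have := hlok k
    linarith
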